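/- Let 0 < D ≤ 1 and let f ∈ C(1 + Dz). If g ∈ 𝒜 is majorized by f on 𝔻, then |g'(z)| ≤ |f'(z)| for all |z| ≤ r₀, where r₀ is the smallest positive root of the equation (1 − r²)·(D r e^{−Dr}/(e^{−Dr} − 1)) + 2r = 0. -/

import Mathlib

open Complex Metric Set

noncomputable section


/-- The open unit disk in ℂ. -/
def unitDisk : Set ℂ := Metric.ball 0 1

/-- The class 𝒜 of analytic functions on 𝔻 normalized by f(0)=0, f'(0)=1. -/
def InClassA (f : ℂ → ℂ) : Prop :=
  DifferentiableOn ℂ f unitDisk ∧ f 0 = 0 ∧ deriv f 0 = 1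

/-- Subordination g ≺ f on the unit disk. -/
def Subord (g f : ℂ → ℂ) : Prop :=
  ∃ ω : ℂ → ℂ, DifferentiableOn ℂ ω unitDisk ∧ ω 0 = 0 ∧
    (∀ z ∈ unitDisk, ω z ∈ unitDisk) ∧ ∀ z ∈ unitDisk, g z = f (ω z)

/-- g is majorized by f on the unit disk. -/
def MajorizedBy (g f : ℂ → ℂ) : Prop :=
  ∃ Φ : ℂ → ℂ, DifferentiableOn ℂ Φ unitDisk ∧
    (∀ z ∈ unitDisk, ‖Φ z‖ ≤ 1) ∧ ∀ z ∈ unitDisk, g z = Φ z * f z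

/-- The Ma-Minda starlike class S*(ψ). -/
def InStar (ψ f : ℂ → ℂ) : Prop :=
  InClassA f ∧ Subord (fun z => z * deriv f z / f z) ψ

/-- The Ma-Minda convex class C(ψ). -/
def InConvexClass (ψ f : ℂ → ℂ) : Prop :=
  InClassA f ∧ Subord (fun z => 1 + z * deriv (deriv f) z / deriv f z) ψ


open Filter intervalIntegral MeasureTheory

/-- Möbius map of the disk. -/
def moeb (a w : ℂ) : ℂ := (w - a) / (1 - (starRingEnd ℂ) a * w)

lemma moeb_denom_ne {a w : ℂ} (ha : norm a < 1) (hw : norm w < 1) :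
    1 - (starRingEnd ℂ) a * w ≠ 0 := by
  intro h
  have h1 : norm ((starRingEnd ℂ) a * w) < 1 := by
    rw [norm_mul, Complex.norm_conj]
    nlinarith [norm_nonneg a, norm_nonneg w]
  have h2 : (starRingEnd ℂ) a * w = 1 := by linear_combination -h
  rw [h2] at h1; simp at h1
lemma moeb_normSq_ident (a w : ℂ) :
    Complex.normSq (1 - (starRingEnd ℂ) a * w) - Complex.normSq (w - a)
      = (1 - Complex.normSq a) * (1 - Complex.normSq w) := by
  simp only [Complex.normSq_apply, Complex.sub_re, Complex.sub_im, Complex.one_re, Complex.one_im,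
    Complex.mul_re, Complex.mul_im, Complex.conj_re, Complex.conj_im]
  ring

lemma moeb_maps {a w : ℂ} (ha : norm a < 1) (hw : norm w < 1) :
    norm (moeb a w) < 1 := by
  rw [moeb, norm_div, div_lt_one (by
    rcases norm_pos_iff.2 (moeb_denom_ne ha hw) with h; exact h)]
  have := moeb_normSq_ident a w
  have ha' : Complex.normSq a < 1 := by
    rw [← Complex.sq_norm]; nlinarith [norm_nonneg a]
  have hw' : Complex.normSq w < 1 := by
    rw [← Complex.sq_norm]; nlinarith [norm_nonneg w]
  have : Complex.normSq (w - a) < Complex.normSq (1 - (starRingEnd ℂ) a * w) := by nlinarith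
  have := Complex.sq_norm (w-a) ▸ Complex.sq_norm (1 - (starRingEnd ℂ) a * w) ▸ this
  nlinarith [norm_nonneg (w-a), norm_nonneg (1 - (starRingEnd ℂ) a * w)]

lemma moeb_hasDerivAt {a w : ℂ} (h : 1 - (starRingEnd ℂ) a * w ≠ 0) :
    HasDerivAt (moeb a) ((1 - (starRingEnd ℂ) a * a) / (1 - (starRingEnd ℂ) a * w)^2) w := by
  have h1 : HasDerivAt (fun z : ℂ => z - a) 1 w := by
    simpa using (hasDerivAt_id w).sub_const a
  have h2 : HasDerivAt (fun z : ℂ => 1 - (starRingEnd ℂ) a * z) (-((starRingEnd ℂ) a)) w := by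
    simpa using ((hasDerivAt_id w).const_mul ((starRingEnd ℂ) a)).const_sub 1
  have := h1.div h2 h
  refine HasDerivAt.congr_deriv this ?_
  ring

lemma moeb_self (a : ℂ) : moeb a a = 0 := by
  simp [moeb]


lemma moeb_zero (a : ℂ) : moeb (-a) 0 = a := by simp [moeb]

section SP
variable {Φ : ℂ → ℂ}

lemma schwarz_pick_strict (hd : DifferentiableOn ℂ Φ (ball 0 1))
    (hm : MapsTo Φ (ball 0 1) (ball 0 1)) {z : ℂ} (hz : z ∈ ball 0 1) :
    norm (deriv Φ z) * (1 - norm z ^ 2) ≤ 1 - norm (Φ z) ^ 2 := by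
  set a := Φ z with ha_def
  have hz1 : norm z < 1 := by simpa using mem_ball_zero_iff.1 hz
  have ha1 : norm a < 1 := by simpa using mem_ball_zero_iff.1 (hm hz)
  set F : ℂ → ℂ := fun w => moeb a (Φ (moeb (-z) w)) with hF_def
  -- HasDerivAt for F at any point of the ball
  have key : ∀ w ∈ ball (0:ℂ) 1, HasDerivAt F
      ((1 - (starRingEnd ℂ) a * a) / (1 - (starRingEnd ℂ) a * (Φ (moeb (-z) w)))^2
        * (deriv Φ (moeb (-z) w))
        * ((1 - (starRingEnd ℂ) (-z) * (-z)) / (1 - (starRingEnd ℂ) (-z) * w)^2)) w := by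
    intro w hw
    have hw1 : norm w < 1 := by simpa using mem_ball_zero_iff.1 hw
    have hz1' : norm (-z) < 1 := by simpa using hz1
    have h1 : HasDerivAt (moeb (-z))
        ((1 - (starRingEnd ℂ) (-z) * (-z)) / (1 - (starRingEnd ℂ) (-z) * w)^2) w :=
      moeb_hasDerivAt (moeb_denom_ne hz1' hw1)
    have hu : norm (moeb (-z) w) < 1 := moeb_maps hz1' hw1
    have huball : moeb (-z) w ∈ ball (0:ℂ) 1 := mem_ball_zero_iff.2 (by simpa using hu)
    have h2 : HasDerivAt Φ (deriv Φ (moeb (-z) w)) (moeb (-z) w) :=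
      (hd.differentiableAt (isOpen_ball.mem_nhds huball)).hasDerivAt
    have hΦu : norm (Φ (moeb (-z) w)) < 1 := by
      simpa using mem_ball_zero_iff.1 (hm huball)
    have h3 : HasDerivAt (moeb a)
        ((1 - (starRingEnd ℂ) a * a) / (1 - (starRingEnd ℂ) a * (Φ (moeb (-z) w)))^2)
        (Φ (moeb (-z) w)) := moeb_hasDerivAt (moeb_denom_ne ha1 hΦu)
    have := h3.comp w (h2.comp w h1)
    simpa [hF_def, Function.comp_def, mul_assoc] using this
  have hF0 : F 0 = 0 := by rw [hF_def]; simp only [moeb_zero, ← ha_def, moeb_self]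
  have hFd : DifferentiableOn ℂ F (ball 0 1) := fun w hw =>
    (key w hw).differentiableAt.differentiableWithinAt
  have hFm : MapsTo F (ball 0 1) (ball 0 1) := by
    intro w hw
    have hw1 : norm w < 1 := by simpa using mem_ball_zero_iff.1 hw
    have hz1' : norm (-z) < 1 := by simpa using hz1
    have huball : moeb (-z) w ∈ ball (0:ℂ) 1 :=
      mem_ball_zero_iff.2 (by simpa using moeb_maps hz1' hw1)
    have hΦu : norm (Φ (moeb (-z) w)) < 1 := by
      simpa using mem_ball_zero_iff.1 (hm huball)
    exact mem_ball_zero_iff.2 (by simpa using moeb_maps ha1 hΦu)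
  have hder : deriv F 0 = (1 - (starRingEnd ℂ) a * a)⁻¹ * (deriv Φ z)
      * (1 - (starRingEnd ℂ) z * z) := by
    have := (key 0 (mem_ball_self one_pos)).deriv
    rw [this, moeb_zero, ← ha_def]
    have hne : 1 - (starRingEnd ℂ) a * a ≠ 0 := moeb_denom_ne ha1 ha1
    field_simp
    simp only [map_neg]
    ring
  have hSch : norm (deriv F 0) ≤ 1 :=
    Complex.norm_deriv_le_one_of_mapsTo_ball hFd (by rw [hF0]; exact hFm.mono_right ball_subset_closedBall) one_pos
  rw [hder] at hSch
  have e1 : norm (1 - (starRingEnd ℂ) a * a) = 1 - norm a ^ 2 := by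
    have : (starRingEnd ℂ) a * a = (Complex.normSq a : ℂ) := by
      rw [mul_comm, Complex.mul_conj]
    rw [this, ← Complex.ofReal_one, ← Complex.ofReal_sub, Complex.norm_real, Real.norm_eq_abs,
      _root_.abs_of_nonneg (by rw [← Complex.sq_norm]; nlinarith [norm_nonneg a]),
      Complex.sq_norm]
  have e2 : norm (1 - (starRingEnd ℂ) z * z) = 1 - norm z ^ 2 := by
    have : (starRingEnd ℂ) z * z = (Complex.normSq z : ℂ) := by
      rw [mul_comm, Complex.mul_conj]
    rw [this, ← Complex.ofReal_one, ← Complex.ofReal_sub, Complex.norm_real, Real.norm_eq_abs,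
      _root_.abs_of_nonneg (by rw [← Complex.sq_norm]; nlinarith [norm_nonneg z]),
      Complex.sq_norm]
  rw [norm_mul, norm_mul, norm_inv, e1, e2] at hSch
  have ha2 : 0 < 1 - norm a ^ 2 := by nlinarith [norm_nonneg a]
  rw [inv_mul_eq_div, div_mul_eq_mul_div, div_le_one ha2] at hSch
  linarith [hSch]

lemma schwarz_pick (hd : DifferentiableOn ℂ Φ (ball 0 1))
    (hb : ∀ w ∈ ball (0:ℂ) 1, norm (Φ w) ≤ 1) {z : ℂ} (hz : z ∈ ball 0 1) :
    norm (deriv Φ z) * (1 - norm z ^ 2) ≤ 1 - norm (Φ z) ^ 2 := by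
  have hstep : ∀ s : ℝ, s ∈ Ioo (0:ℝ) 1 →
      s * (norm (deriv Φ z) * (1 - norm z ^ 2))
        ≤ 1 - s^2 * norm (Φ z) ^ 2 := by
    intro s hs
    have hd' : DifferentiableOn ℂ (fun w => (s:ℂ) * Φ w) (ball 0 1) :=
      (differentiableOn_const _).mul hd
    have hm' : MapsTo (fun w => (s:ℂ) * Φ w) (ball 0 1) (ball 0 1) := by
      intro w hw
      rw [mem_ball_zero_iff]
      calc ‖(s:ℂ) * Φ w‖ = s * norm (Φ w) := by
            simp [abs_of_pos hs.1]
        _ ≤ s * 1 := by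
            exact mul_le_mul_of_nonneg_left (hb w hw) hs.1.le
        _ < 1 := by rw [mul_one]; exact hs.2
    have := schwarz_pick_strict hd' hm' hz
    have hder : deriv (fun w => (s:ℂ) * Φ w) z = (s:ℂ) * deriv Φ z :=
      deriv_const_mul _ (hd.differentiableAt (isOpen_ball.mem_nhds hz))
    rw [hder] at this
    calc s * (norm (deriv Φ z) * (1 - norm z ^ 2))
        = norm ((s:ℂ) * deriv Φ z) * (1 - norm z ^ 2) := by
          rw [norm_mul, Complex.norm_real, Real.norm_eq_abs, abs_of_pos hs.1]; ring
      _ ≤ 1 - norm ((s:ℂ) * Φ z) ^ 2 := this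
      _ = 1 - s^2 * norm (Φ z) ^ 2 := by
          rw [norm_mul, Complex.norm_real, Real.norm_eq_abs, abs_of_pos hs.1]; ring
  have h1 : Filter.Tendsto (fun s : ℝ => s * (norm (deriv Φ z) * (1 - norm z ^ 2)))
      (nhdsWithin 1 (Iio 1)) (nhds (norm (deriv Φ z) * (1 - norm z ^ 2))) := by
    have : Continuous (fun s : ℝ => s * (norm (deriv Φ z) * (1 - norm z ^ 2))) := by
      continuity
    simpa using (this.tendsto 1).mono_left nhdsWithin_le_nhds
  have h2 : Filter.Tendsto (fun s : ℝ => 1 - s^2 * norm (Φ z) ^ 2)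
      (nhdsWithin 1 (Iio 1)) (nhds (1 - norm (Φ z) ^ 2)) := by
    have : Continuous (fun s : ℝ => 1 - s^2 * norm (Φ z) ^ 2) := by continuity
    simpa using (this.tendsto 1).mono_left nhdsWithin_le_nhds
  refine le_of_tendsto_of_tendsto h1 h2 ?_
  filter_upwards [Ioo_mem_nhdsLT_of_mem (show (1:ℝ) ∈ Ioc 0 1 by norm_num)] with s hs
  exact hstep s hs
end SP

lemma ode_ident {f ω : ℂ → ℂ} {D : ℂ}
    (hfd : DifferentiableOn ℂ f (ball 0 1))
    (hf'0 : deriv f 0 = 1)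
    (heq : ∀ z ∈ ball (0:ℂ) 1, z * deriv (deriv f) z / deriv f z = D * ω z)
    (hωc : ContinuousOn ω (ball 0 1)) :
    ∀ z ∈ ball (0:ℂ) 1, z * deriv (deriv f) z = D * ω z * deriv f z := by
  have hfa : AnalyticOnNhd ℂ f (ball 0 1) := hfd.analyticOnNhd isOpen_ball
  have hf'a : AnalyticOnNhd ℂ (deriv f) (ball 0 1) := hfa.deriv
  have hf''a : AnalyticOnNhd ℂ (deriv (deriv f)) (ball 0 1) := hf'a.deriv
  set S : Set ℂ := {z | z ∈ ball (0:ℂ) 1 ∧ deriv f z ≠ 0} with hS_def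
  have claim1 : ∀ z ∈ S, z * deriv (deriv f) z - D * ω z * deriv f z = 0 := by
    rintro z ⟨hz, hne⟩
    have := heq z hz
    field_simp at this
    linear_combination this
  have claim2 : ∀ w ∈ ball (0:ℂ) 1, w ∈ closure S := by
    intro w hw
    by_contra hcl
    have hV : IsOpen ((closure S)ᶜ ∩ ball (0:ℂ) 1) :=
      (isClosed_closure.isOpen_compl).inter isOpen_ball
    have hwV : w ∈ (closure S)ᶜ ∩ ball (0:ℂ) 1 := ⟨hcl, hw⟩
    have hzero : ∀ z ∈ (closure S)ᶜ ∩ ball (0:ℂ) 1, deriv f z = 0 := by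
      rintro z ⟨hz1, hz2⟩
      by_contra hne
      exact hz1 (subset_closure ⟨hz2, hne⟩)
    have hev : deriv f =ᶠ[nhds w] 0 := by
      filter_upwards [hV.mem_nhds hwV] with z hz using hzero z hz
    have := hf'a.eqOn_zero_of_preconnected_of_eventuallyEq_zero
      (convex_ball (0:ℂ) 1).isPreconnected hw hev
    have h0 := this (mem_ball_self one_pos)
    rw [hf'0] at h0
    exact one_ne_zero h0
  intro w hw
  set h : ℂ → ℂ := fun z => z * deriv (deriv f) z - D * ω z * deriv f z with hh
  have hc : ContinuousOn h (ball 0 1) := by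
    apply ContinuousOn.sub
    · exact continuousOn_id.mul hf''a.continuousOn
    · exact (continuousOn_const.mul hωc).mul hf'a.continuousOn
  have hca : ContinuousAt h w := hc.continuousAt (isOpen_ball.mem_nhds hw)
  have hne : (nhdsWithin w S).NeBot := mem_closure_iff_nhdsWithin_neBot.1 (claim2 w hw)
  have t1 : Tendsto h (nhdsWithin w S) (nhds (h w)) := hca.tendsto.mono_left nhdsWithin_le_nhds
  have t2 : Tendsto h (nhdsWithin w S) (nhds 0) := by
    apply Tendsto.congr' _ tendsto_const_nhds
    filter_upwards [self_mem_nhdsWithin] with z hz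
    exact (claim1 z hz).symm
  have := tendsto_nhds_unique t1 t2
  rw [hh] at this
  linear_combination this

lemma second_deriv_bound {f ω : ℂ → ℂ} {D : ℝ} (hD0 : 0 < D)
    (hfd : DifferentiableOn ℂ f (ball 0 1))
    (hωd : DifferentiableOn ℂ ω (ball 0 1)) (hω0 : ω 0 = 0)
    (hωm : MapsTo ω (ball 0 1) (ball 0 1))
    (hode : ∀ z ∈ ball (0:ℂ) 1, z * deriv (deriv f) z = (D:ℂ) * ω z * deriv f z) :
    ∀ z ∈ ball (0:ℂ) 1, norm (deriv (deriv f) z) ≤ D * norm (deriv f z) := by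
  have hfa : AnalyticOnNhd ℂ f (ball 0 1) := hfd.analyticOnNhd isOpen_ball
  have hf'a : AnalyticOnNhd ℂ (deriv f) (ball 0 1) := hfa.deriv
  have hf''a : AnalyticOnNhd ℂ (deriv (deriv f)) (ball 0 1) := hf'a.deriv
  have hSch : ∀ z ∈ ball (0:ℂ) 1, norm (ω z) ≤ norm z := by
    intro z hz
    exact Complex.norm_le_norm_of_mapsTo_ball hωd (hωm.mono_right ball_subset_closedBall) hω0 (mem_ball_zero_iff.1 hz)
  have main : ∀ z ∈ ball (0:ℂ) 1, z ≠ 0 →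
      norm (deriv (deriv f) z) ≤ D * norm (deriv f z) := by
    intro z hz hz0
    have h := hode z hz
    have : norm z * norm (deriv (deriv f) z)
        = D * norm (ω z) * norm (deriv f z) := by
      have := congrArg norm h
      simpa [norm_mul, Complex.norm_real, Real.norm_eq_abs, abs_of_pos hD0] using this
    have habs : norm z * norm (deriv (deriv f) z)
        ≤ norm z * (D * norm (deriv f z)) := by
      rw [this]
      have := hSch z hz
      nlinarith [mul_nonneg (mul_nonneg hD0.le (norm_nonneg (deriv f z))) (sub_nonneg.2 this)]
    have hzpos : 0 < norm z := norm_pos_iff.mpr hz0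
    exact le_of_mul_le_mul_left (by linarith [habs]) hzpos
  intro z hz
  rcases eq_or_ne z 0 with rfl | hz0
  · -- limit argument at 0
    have hev : ∀ᶠ w in nhdsWithin (0:ℂ) {0}ᶜ,
        norm (deriv (deriv f) w) ≤ D * norm (deriv f w) := by
      filter_upwards [nhdsWithin_le_nhds (isOpen_ball.mem_nhds hz), self_mem_nhdsWithin]
        with w hw hw0
      exact main w hw hw0
    have t1 : Tendsto (fun w => norm (deriv (deriv f) w)) (nhdsWithin (0:ℂ) {0}ᶜ)
        (nhds (norm (deriv (deriv f) 0))) := by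
      have : ContinuousAt (fun w => norm (deriv (deriv f) w)) 0 :=
        (continuous_norm.continuousAt).comp
          ((hf''a.continuousOn.continuousAt (isOpen_ball.mem_nhds hz)))
      exact this.tendsto.mono_left nhdsWithin_le_nhds
    have t2 : Tendsto (fun w => D * norm (deriv f w)) (nhdsWithin (0:ℂ) {0}ᶜ)
        (nhds (D * norm (deriv f 0))) := by
      have : ContinuousAt (fun w => D * norm (deriv f w)) 0 :=
        (continuousAt_const).mul ((continuous_norm.continuousAt).comp
          ((hf'a.continuousOn.continuousAt (isOpen_ball.mem_nhds hz))))
      exact this.tendsto.mono_left nhdsWithin_le_nhds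
    exact le_of_tendsto_of_tendsto t1 t2 hev
  · exact main z hz hz0

lemma deriv_exp_bound {f : ℂ → ℂ} {D : ℝ} (hD0 : 0 < D)
    (hfd : DifferentiableOn ℂ f (ball 0 1))
    (hbd : ∀ w ∈ ball (0:ℂ) 1, norm (deriv (deriv f) w) ≤ D * norm (deriv f w))
    {z : ℂ} (hz : z ∈ ball 0 1) {t : ℝ} (ht : t ∈ Icc (0:ℝ) 1) :
    norm (deriv f ((t:ℂ)*z)) ≤
      norm (deriv f z) * Real.exp (D * norm z * (1 - t)) := by
  have hfa : AnalyticOnNhd ℂ f (ball 0 1) := hfd.analyticOnNhd isOpen_ball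
  have hf'a : AnalyticOnNhd ℂ (deriv f) (ball 0 1) := hfa.deriv
  set ρ := norm z with hρ
  have hρ1 : ρ < 1 := mem_ball_zero_iff.1 hz
  set m : ℝ → ℂ := fun s => (1 - (s:ℂ)) * z with hm
  have hmem : ∀ s ∈ Icc (0:ℝ) 1, m s ∈ ball (0:ℂ) 1 := by
    intro s hs
    rw [mem_ball_zero_iff]
    show ‖((1:ℂ) - (s:ℂ)) * z‖ < 1
    have h₀ : ((1:ℂ) - (s:ℂ)) = ((1 - s : ℝ) : ℂ) := by push_cast; ring
    rw [h₀]
    simp only [norm_mul, Complex.norm_real, Real.norm_eq_abs]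
    have h1 : |1 - s| ≤ 1 := by rw [abs_le]; constructor <;> [linarith [hs.2]; linarith [hs.1]]
    calc |1 - s| * ‖z‖ ≤ 1 * ‖z‖ := by
          exact mul_le_mul_of_nonneg_right h1 (norm_nonneg z)
      _ < 1 := by rw [one_mul]; exact mem_ball_zero_iff.1 hz
  set v : ℝ → ℂ := fun s => deriv f (m s) with hv
  have hminner : ∀ s : ℝ, HasDerivAt m (-z) s := by
    intro s
    have h1 : HasDerivAt (fun s : ℝ => (s:ℂ)) 1 s := by
      simpa using (hasDerivAt_id s).ofReal_comp
    have h2 : HasDerivAt (fun s : ℝ => (1:ℂ) - (s:ℂ)) (-1) s := by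
      simpa using h1.const_sub 1
    have := h2.mul_const z
    simpa [hm] using this
  have hvderiv : ∀ s ∈ Icc (0:ℝ) 1, HasDerivAt v (-z * deriv (deriv f) (m s)) s := by
    intro s hs
    have houter : HasDerivAt (deriv f) (deriv (deriv f) (m s)) (m s) :=
      ((hf'a (m s) (hmem s hs)).differentiableAt).hasDerivAt
    have := HasDerivAt.scomp s houter (hminner s)
    simpa [hv, smul_eq_mul, mul_comm, Function.comp_def] using this
  have hvcont : ContinuousOn v (Icc 0 1) := by
    refine ContinuousOn.comp hf'a.continuousOn ?_ hmem
    exact (Continuous.continuousOn (by continuity))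
  have gron := norm_le_gronwallBound_of_norm_deriv_right_le (a := 0) (b := 1)
    (f := v) (f' := fun s => -z * deriv (deriv f) (m s)) (δ := ‖v 0‖) (K := D * ρ) (ε := 0)
    hvcont (fun s hs => (hvderiv s (Ico_subset_Icc_self hs)).hasDerivWithinAt)
    le_rfl ?_ (1 - t) ⟨by linarith [ht.2], by linarith [ht.1]⟩
  · have hv0 : v 0 = deriv f z := by simp [hv, hm]
    have hvt : v (1 - t) = deriv f ((t:ℂ)*z) := by
      have h : ((1:ℂ) - ((1 - t : ℝ):ℂ)) * z = (t:ℂ) * z := by push_cast; ring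
      show deriv f (((1:ℂ) - ((1-t:ℝ):ℂ)) * z) = _
      rw [h]
    rw [hv0, hvt, sub_zero, gronwallBound_ε0] at gron
    simpa [mul_comm] using gron
  · intro s hs
    have hs' : s ∈ Icc (0:ℝ) 1 := Ico_subset_Icc_self hs
    have := hbd (m s) (hmem s hs')
    have hmz : ‖m s‖ ≤ ρ := by
      show ‖((1:ℂ) - (s:ℂ)) * z‖ ≤ ρ
      have h₀ : ((1:ℂ) - (s:ℂ)) = ((1 - s : ℝ) : ℂ) := by push_cast; ring
      rw [h₀]
      simp only [norm_mul, Complex.norm_real, Real.norm_eq_abs]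
      have h1 : |1 - s| ≤ 1 := by rw [abs_le]; constructor <;> [linarith [hs'.2]; linarith [hs'.1]]
      calc |1-s| * ‖z‖ ≤ 1 * ‖z‖ := mul_le_mul_of_nonneg_right h1 (norm_nonneg z)
        _ = ρ := by rw [one_mul]
    calc ‖-z * deriv (deriv f) (m s)‖ = ρ * ‖deriv (deriv f) (m s)‖ := by
          simp [hρ]
      _ ≤ ρ * (D * ‖deriv f (m s)‖) := by
          apply mul_le_mul_of_nonneg_left _ (norm_nonneg z)
          simpa using this
      _ ≤ D * ρ * ‖v s‖ + 0 := by
          rw [add_zero, hv]; ring_nf; exact le_rfl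


lemma f_int_bound {f : ℂ → ℂ} {D : ℝ} (hD0 : 0 < D)
    (hfd : DifferentiableOn ℂ f (ball 0 1)) (hf0 : f 0 = 0)
    (hbd : ∀ w ∈ ball (0:ℂ) 1, norm (deriv (deriv f) w) ≤ D * norm (deriv f w))
    {z : ℂ} (hz : z ∈ ball 0 1) :
    norm (f z) ≤ norm (deriv f z) * (Real.exp (D * norm z) - 1) / D := by
  rcases eq_or_ne z 0 with rfl | hz0
  · simp [hf0]
  have hfa : AnalyticOnNhd ℂ f (ball 0 1) := hfd.analyticOnNhd isOpen_ball
  have hf'a : AnalyticOnNhd ℂ (deriv f) (ball 0 1) := hfa.deriv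
  obtain ⟨ρ, hρ⟩ : ∃ ρ : ℝ, norm z = ρ := ⟨_, rfl⟩
  rw [hρ]
  have hρpos : 0 < ρ := hρ ▸ norm_pos_iff.mpr hz0
  have hρ1 : ρ < 1 := hρ ▸ mem_ball_zero_iff.1 hz
  have hmem : ∀ t ∈ Icc (0:ℝ) 1, (t:ℂ) * z ∈ ball (0:ℂ) 1 := by
    intro t ht
    rw [mem_ball_zero_iff]
    simp only [norm_mul, Complex.norm_real, Real.norm_eq_abs, _root_.abs_of_nonneg ht.1]
    calc t * ‖z‖ ≤ 1 * ‖z‖ := mul_le_mul_of_nonneg_right ht.2 (norm_nonneg z)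
      _ < 1 := by rw [one_mul]; exact mem_ball_zero_iff.1 hz
  -- FTC
  have hφderiv : ∀ t ∈ uIcc (0:ℝ) 1,
      HasDerivAt (fun s : ℝ => f ((s:ℂ) * z)) (z * deriv f ((t:ℂ) * z)) t := by
    intro t ht
    rw [uIcc_of_le zero_le_one] at ht
    have hinner : HasDerivAt (fun s : ℝ => (s:ℂ) * z) z t := by
      have h1 : HasDerivAt (fun s : ℝ => (s:ℂ)) 1 t := by
        simpa using (hasDerivAt_id t).ofReal_comp
      simpa using h1.mul_const z
    have houter : HasDerivAt f (deriv f ((t:ℂ)*z)) ((t:ℂ)*z) :=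
      (hfd.differentiableAt (isOpen_ball.mem_nhds (hmem t ht))).hasDerivAt
    have := HasDerivAt.scomp t houter hinner
    simpa [smul_eq_mul, mul_comm, Function.comp_def] using this
  have hcont : ContinuousOn (fun t : ℝ => z * deriv f ((t:ℂ) * z)) (uIcc (0:ℝ) 1) := by
    rw [uIcc_of_le zero_le_one]
    apply continuousOn_const.mul
    refine ContinuousOn.comp hf'a.continuousOn (Continuous.continuousOn (by continuity)) hmem
  have hint : IntervalIntegrable (fun t : ℝ => z * deriv f ((t:ℂ) * z)) volume 0 1 :=
    hcont.intervalIntegrable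
  have hFTC := integral_eq_sub_of_hasDerivAt hφderiv hint
  have hfz : f z = ∫ t in (0:ℝ)..1, z * deriv f ((t:ℂ) * z) := by
    rw [hFTC]
    norm_num [hf0]
  -- bound the integral
  set g : ℝ → ℝ := fun t => ρ * (norm (deriv f z) * Real.exp (D * ρ * (1 - t))) with hg
  have hgint : IntervalIntegrable g volume 0 1 := by
    apply ContinuousOn.intervalIntegrable
    apply Continuous.continuousOn; continuity
  have hnorm : norm (f z) ≤ |∫ t in (0:ℝ)..1, g t| := by
    rw [hfz]
    refine intervalIntegral.norm_integral_le_abs_of_norm_le ?_ hgint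
    refine (ae_restrict_iff' measurableSet_uIoc).2 (Eventually.of_forall ?_)
    intro t ht
    have ht' : t ∈ Icc (0:ℝ) 1 := by
      rw [uIoc_of_le zero_le_one] at ht
      exact ⟨ht.1.le, ht.2⟩
    have := hρ ▸ deriv_exp_bound hD0 hfd hbd hz ht'
    calc ‖z * deriv f ((t:ℂ) * z)‖ = ρ * norm (deriv f ((t:ℂ)*z)) := by
          simp [norm_mul, hρ]
      _ ≤ g t := by
          rw [hg]
          exact mul_le_mul_of_nonneg_left this (hρ ▸ norm_nonneg z)
  -- compute the integral of g
  have hexp : (∫ t in (0:ℝ)..1, Real.exp (D * ρ * (1 - t)))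
      = (Real.exp (D * ρ) - 1) / (D * ρ) := by
    have hDρ : 0 < D * ρ := mul_pos hD0 hρpos
    have hG : ∀ t ∈ uIcc (0:ℝ) 1, HasDerivAt (fun t : ℝ => -(Real.exp (D * ρ * (1 - t)) / (D * ρ)))
        (Real.exp (D * ρ * (1 - t))) t := by
      intro t _
      have h1 : HasDerivAt (fun t : ℝ => D * ρ * (1 - t)) (-(D * ρ)) t := by
        simpa using ((hasDerivAt_id t).const_sub 1).const_mul (D * ρ)
      have h2 := (h1.exp).div_const (D * ρ)
      have h3 := h2.neg
      have h4 : -(Real.exp (D * ρ * (1 - t)) * -(D * ρ) / (D * ρ)) = Real.exp (D * ρ * (1 - t)) := by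
        rw [mul_neg, neg_div, neg_neg, mul_div_assoc, div_self hDρ.ne', mul_one]
      rw [← h4]
      exact h3
    have hintexp : IntervalIntegrable (fun t : ℝ => Real.exp (D * ρ * (1 - t))) volume 0 1 := by
      apply ContinuousOn.intervalIntegrable
      apply Continuous.continuousOn; continuity
    rw [integral_eq_sub_of_hasDerivAt hG hintexp]
    norm_num
    ring
  have hgval : (∫ t in (0:ℝ)..1, g t)
      = norm (deriv f z) * (Real.exp (D * ρ) - 1) / D := by
    rw [hg]
    have : ∀ t : ℝ, ρ * (norm (deriv f z) * Real.exp (D * ρ * (1 - t)))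
        = (ρ * norm (deriv f z)) * Real.exp (D * ρ * (1 - t)) := by intro t; ring
    simp_rw [this]
    rw [intervalIntegral.integral_const_mul, hexp]
    rw [eq_div_iff hD0.ne']
    field_simp
  have hDρ : 0 < D * ρ := mul_pos hD0 hρpos
  have hexp1 : (0:ℝ) ≤ Real.exp (D * ρ) - 1 := by
    nlinarith [Real.one_le_exp hDρ.le]
  calc norm (f z) ≤ |∫ t in (0:ℝ)..1, g t| := hnorm
    _ = norm (deriv f z) * (Real.exp (D * ρ) - 1) / D := by
        rw [hgval]
        exact _root_.abs_of_nonneg (div_nonneg (mul_nonneg (norm_nonneg _) hexp1) hD0.le)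


set_option maxHeartbeats 1600000 in
theorem stmt_1 (D : ℝ) (hD0 : 0 < D) (hD1 : D ≤ 1) (f g : ℂ → ℂ) (r₀ : ℝ)
    (hf : InConvexClass (fun z => 1 + (D : ℂ) * z) f)
    (hg : InClassA g) (hmaj : MajorizedBy g f)
    (hr₀pos : 0 < r₀)
    (hr₀root : (1 - r₀ ^ 2) *
      (D * r₀ * Real.exp (-D * r₀) / (Real.exp (-D * r₀) - 1)) + 2 * r₀ = 0)
    (hr₀least : ∀ r : ℝ, 0 < r →
      (1 - r ^ 2) * (D * r * Real.exp (-D * r) / (Real.exp (-D * r) - 1)) + 2 * r = 0 →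
      r₀ ≤ r) :
    ∀ z : ℂ, norm z ≤ r₀ →
      norm (deriv g z) ≤ norm (deriv f z) := by
  obtain ⟨⟨hfd, hf0, hf'0⟩, ω, hωd, hω0, hωm, hωeq⟩ := hf
  obtain ⟨Φ, hΦd, hΦb, hgΦ⟩ := hmaj
  simp only [unitDisk] at hfd hωd hω0 hωm hωeq hΦd hΦb hgΦ
  -- the ODE satisfied by f
  have heq : ∀ w ∈ ball (0:ℂ) 1, w * deriv (deriv f) w / deriv f w = (D:ℂ) * ω w := by
    intro w hw
    have := hωeq w hw
    linear_combination this
  have hode := ode_ident hfd hf'0 heq hωd.continuousOn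
  have hbd := second_deriv_bound hD0 hfd hωd hω0 (fun w hw => hωm w hw) hode
  -- consequences of the root equation
  have hQ1 : 1 < Real.exp (D * r₀) := by
    have := Real.add_one_lt_exp (x := D * r₀) (by positivity)
    nlinarith [mul_pos hD0 hr₀pos]
  have hQpos : (0:ℝ) < Real.exp (D * r₀) := Real.exp_pos _
  have hkey : (1 - r₀^2) * D = 2 * (Real.exp (D * r₀) - 1) := by
    have hE : Real.exp (-D * r₀) = (Real.exp (D * r₀))⁻¹ := by
      rw [neg_mul, Real.exp_neg]
    rw [hE] at hr₀root
    have hinv1 : (Real.exp (D * r₀))⁻¹ < 1 := by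
      rw [inv_lt_one₀ hQpos]; exact hQ1
    have h2 : (Real.exp (D * r₀))⁻¹ - 1 ≠ 0 := by linarith
    field_simp at hr₀root
    have hne : 1 - Real.exp (D * r₀) ≠ 0 := by intro h; nlinarith
    rw [mul_comm r₀ D, div_add' _ _ _ hne, mul_div_assoc', div_eq_iff hne, zero_mul] at hr₀root
    have hcancel : (1 - r₀ ^ 2) * D * r₀ = 2 * (Real.exp (D * r₀) - 1) * r₀ := by
      linear_combination hr₀root
    exact mul_right_cancel₀ hr₀pos.ne' hcancel
  have hr₀1 : r₀ < 1 := by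
    have hp : 0 < (1 - r₀^2) * D := by rw [hkey]; linarith
    have h1r : 0 < 1 - r₀ ^ 2 := by
      by_contra hcon
      push_neg at hcon
      nlinarith [mul_nonpos_of_nonpos_of_nonneg hcon hD0.le]
    nlinarith [h1r, sq_nonneg (r₀ - 1)]
  intro z hzr
  obtain ⟨ρ, hρ⟩ : ∃ x : ℝ, norm z = x := ⟨_, rfl⟩
  have hρ0 : 0 ≤ ρ := hρ ▸ norm_nonneg z
  have hρr : ρ ≤ r₀ := hρ ▸ hzr
  have hρ1 : ρ < 1 := lt_of_le_of_lt hρr hr₀1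
  have hzball : z ∈ ball (0:ℂ) 1 := mem_ball_zero_iff.2 (by
    rw [hρ]; exact hρ1)
  obtain ⟨a, ha⟩ : ∃ x : ℝ, norm (Φ z) = x := ⟨_, rfl⟩
  obtain ⟨X, hX⟩ : ∃ x : ℝ, norm (deriv Φ z) = x := ⟨_, rfl⟩
  obtain ⟨F, hF⟩ : ∃ x : ℝ, norm (deriv f z) = x := ⟨_, rfl⟩
  obtain ⟨Fz, hFz'⟩ : ∃ x : ℝ, norm (f z) = x := ⟨_, rfl⟩
  -- derivative of g
  have hev : g =ᶠ[nhds z] fun w => Φ w * f w := by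
    filter_upwards [isOpen_ball.mem_nhds hzball] with w hw using hgΦ w hw
  have hderg : deriv g z = deriv Φ z * f z + Φ z * deriv f z := by
    rw [hev.deriv_eq]
    exact deriv_mul (hΦd.differentiableAt (isOpen_ball.mem_nhds hzball))
      (hfd.differentiableAt (isOpen_ball.mem_nhds hzball))
  have ha1 : a ≤ 1 := ha ▸ hΦb z hzball
  have ha0 : 0 ≤ a := ha ▸ norm_nonneg _
  have hX0 : 0 ≤ X := hX ▸ norm_nonneg _
  have hF0 : 0 ≤ F := hF ▸ norm_nonneg _
  have hFz0 : 0 ≤ Fz := hFz' ▸ norm_nonneg _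
  have hSP : X * (1 - ρ^2) ≤ 1 - a^2 := by
    have := schwarz_pick hΦd hΦb hzball
    rw [hρ, ha, hX] at this
    exact this
  obtain ⟨c, hc⟩ : ∃ x : ℝ, (Real.exp (D * ρ) - 1)/D = x := ⟨_, rfl⟩
  have hFzb : Fz ≤ F * c := by
    have := f_int_bound hD0 hfd hf0 hbd hzball
    rw [hρ, hF, hFz'] at this
    calc Fz ≤ F * (Real.exp (D*ρ)-1)/D := this
      _ = F * c := by rw [← hc]; ring
  have hc0 : 0 ≤ c := by
    have h1 : 1 ≤ Real.exp (D*ρ) := Real.one_le_exp (by positivity)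
    rw [← hc]
    apply div_nonneg _ hD0.le
    linarith
  have h2c : 2 * c ≤ 1 - ρ^2 := by
    have hmono : Real.exp (D*ρ) ≤ Real.exp (D*r₀) :=
      Real.exp_le_exp.2 (by nlinarith)
    rw [← hc, mul_div_assoc']
    rw [div_le_iff₀ hD0]
    have hsq : ρ^2 ≤ r₀^2 := by nlinarith
    have hmul : ρ^2 * D ≤ r₀^2 * D := mul_le_mul_of_nonneg_right hsq hD0.le
    linarith [hmono, hkey, hmul]
  have hpos : 0 < 1 - ρ^2 := by nlinarith
  have h3 : (1 - a^2) * c ≤ (1 - a) * (1 - ρ^2) := by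
    nlinarith [mul_nonneg (sub_nonneg.2 ha1) (by linarith : (0:ℝ) ≤ 1 - ρ^2 - 2*c),
      mul_nonneg hc0 (sq_nonneg (1-a))]
  have h4 : X * Fz * (1-ρ^2) ≤ (1-a) * (1-ρ^2) * F := by
    calc X * Fz * (1-ρ^2) ≤ X*(F*c)*(1-ρ^2) :=
          mul_le_mul_of_nonneg_right (mul_le_mul_of_nonneg_left hFzb hX0) hpos.le
      _ = (X*(1-ρ^2))*(F*c) := by ring
      _ ≤ (1-a^2)*(F*c) := mul_le_mul_of_nonneg_right hSP (mul_nonneg hF0 hc0)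
      _ = ((1-a^2)*c)*F := by ring
      _ ≤ ((1-a)*(1-ρ^2))*F := mul_le_mul_of_nonneg_right h3 hF0
      _ = (1-a)*(1-ρ^2)*F := by ring
  have h5 : X * Fz ≤ (1-a)*F := by
    have h6 : (X * Fz) * (1-ρ^2) ≤ ((1-a)*F) * (1-ρ^2) := by linarith [h4]
    exact le_of_mul_le_mul_right h6 hpos
  calc norm (deriv g z)
      = norm (deriv Φ z * f z + Φ z * deriv f z) := by rw [hderg]
    _ ≤ X * Fz + a * F := by
        refine (norm_add_le _ _).trans ?_
        rw [norm_mul, norm_mul, hX, hFz', ha, hF]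
    _ ≤ F := by nlinarith [h5]
    _ = norm (deriv f z) := hF.symm
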